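/- Let F ∈ ℂ[x_1,…,x_r] be a smooth homogeneous polynomial of degree d ≥ 3, where r ≥ 2. Suppose every element of Aut(F) is a semi-permutation matrix (a monomial matrix: a matrix with exactly one nonzero entry in each row and each column). Then |Aut(F)| ≤ d^r·r!, and equality occurs if and only if F is isomorphic to the Fermat form x_1^d + x_2^d + ⋯ + x_r^d. -/

import Mathlib

open MvPolynomial

/-- The action of a matrix on a multivariate polynomial: `A(F) = F(∑ a₁ᵢxᵢ, …, ∑ aᵣᵢxᵢ)`. -/
noncomputable def matAct {r : ℕ} (A : Matrix (Fin r) (Fin r) ℂ) (F : MvPolynomial (Fin r) ℂ) :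
    MvPolynomial (Fin r) ℂ :=
  MvPolynomial.bind₁ (fun i => ∑ j, MvPolynomial.C (A i j) * MvPolynomial.X j) F

lemma matAct_one {r : ℕ} (F : MvPolynomial (Fin r) ℂ) : matAct 1 F = F := by
  have : (fun i : Fin r => ∑ j, MvPolynomial.C ((1 : Matrix (Fin r) (Fin r) ℂ) i j)
      * MvPolynomial.X j) = MvPolynomial.X := by
    funext i
    simp [Matrix.one_apply, apply_ite (MvPolynomial.C (σ := Fin r) (R := ℂ)), ite_mul]
  rw [matAct, this, MvPolynomial.bind₁_X_left]
  rfl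

lemma matAct_mul {r : ℕ} (A B : Matrix (Fin r) (Fin r) ℂ) (F : MvPolynomial (Fin r) ℂ) :
    matAct (A * B) F = matAct B (matAct A F) := by
  unfold matAct
  rw [MvPolynomial.bind₁_bind₁]
  have h : (fun i : Fin r => (bind₁ fun i => ∑ j, C (B i j) * X j) (∑ j, C (A i j) * X j))
      = fun i : Fin r => ∑ j, C ((A * B) i j) * X j := by
    funext i
    rw [map_sum]
    simp only [map_mul, bind₁_C_right, bind₁_X_right, algebraMap_eq, Matrix.mul_apply,
      Finset.mul_sum, map_sum, Finset.sum_mul, C_mul]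
    rw [Finset.sum_comm]
    simp [mul_assoc]
  rw [h]

/-- The automorphism group of a form, as a subgroup of `GL`. -/
noncomputable def formAut {r : ℕ} (F : MvPolynomial (Fin r) ℂ) : Subgroup (GL (Fin r) ℂ) where
  carrier := {A | matAct (A : Matrix (Fin r) (Fin r) ℂ) F = F}
  one_mem' := by simpa using matAct_one F
  mul_mem' := by
    intro A B hA hB
    simp only [Set.mem_setOf_eq] at *
    rw [Units.val_mul, matAct_mul, hA, hB]
  inv_mem' := by
    intro A hA
    simp only [Set.mem_setOf_eq] at *
    conv_lhs => rw [← hA]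
    rw [← matAct_mul, Units.mul_inv, matAct_one]

/-- `F` is a smooth form: the origin is the only common zero of all partial derivatives. -/
def IsSmoothForm {r : ℕ} (F : MvPolynomial (Fin r) ℂ) : Prop :=
  ∀ x : Fin r → ℂ, (∀ i, MvPolynomial.eval x (MvPolynomial.pderiv i F) = 0) → x = 0

/-- Two forms are isomorphic if they are in the same `GL`-orbit. -/
def FormIso {r : ℕ} (F G : MvPolynomial (Fin r) ℂ) : Prop :=
  ∃ A : GL (Fin r) ℂ, matAct (A : Matrix (Fin r) (Fin r) ℂ) F = G

/-- The Fermat form of degree `d` in `r` variables. -/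
noncomputable def fermatForm (r d : ℕ) : MvPolynomial (Fin r) ℂ :=
  ∑ i, MvPolynomial.X i ^ d

/-- A semi-permutation (monomial) matrix: a diagonal matrix up to permutation of columns. -/
def IsSemiPermutation {r : ℕ} (A : Matrix (Fin r) (Fin r) ℂ) : Prop :=
  ∃ (σ : Equiv.Perm (Fin r)) (dvec : Fin r → ℂ),
    (∀ i, dvec i ≠ 0) ∧ ∀ i j, A i j = if σ i = j then dvec i else 0


section SPAux

open Equiv Finset

-- ### roots of unity facts

lemma muSet_eq (m : ℕ) : {u : ℂˣ | u ^ m = 1} = (rootsOfUnity m ℂ : Set ℂˣ) := by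
  ext u; simp [mem_rootsOfUnity]

lemma muSet_finite (m : ℕ) (hm : m ≠ 0) : ({u : ℂˣ | u ^ m = 1}).Finite := by
  have : NeZero m := ⟨hm⟩
  rw [muSet_eq, Set.finite_coe_iff.symm, SetLike.coe_sort_coe]
  exact inferInstance

lemma muSet_card (m : ℕ) (hm : m ≠ 0) : Nat.card {u : ℂˣ | u ^ m = 1} = m := by
  have : NeZero m := ⟨hm⟩
  have h : Nat.card {u : ℂˣ | u ^ m = 1} = Nat.card (rootsOfUnity m ℂ) := by
    rw [muSet_eq, SetLike.coe_sort_coe]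
  rw [h]
  exact Complex.card_rootsOfUnity m

lemma exists_unit_pow (m : ℕ) (hm : m ≠ 0) (c : ℂˣ) : ∃ u : ℂˣ, u ^ m = c := by
  obtain ⟨z, hz⟩ := IsAlgClosed.exists_pow_nat_eq (c : ℂ) (Nat.pos_of_ne_zero hm)
  have hz0 : z ≠ 0 := by
    intro h; rw [h, zero_pow hm] at hz; exact c.ne_zero hz.symm
  refine ⟨Units.mk0 z hz0, Units.ext ?_⟩
  simpa using hz

-- ### monomial matrices

variable {r : ℕ}

/-- monomial matrix -/
def monoMat (σ : Equiv.Perm (Fin r)) (t : Fin r → ℂ) : Matrix (Fin r) (Fin r) ℂ :=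
  Matrix.of fun i j => if σ i = j then t i else 0

lemma monoMat_apply (σ : Equiv.Perm (Fin r)) (t : Fin r → ℂ) (i j : Fin r) :
    monoMat σ t i j = if σ i = j then t i else 0 := rfl

lemma monoMat_mul (σ τ : Equiv.Perm (Fin r)) (t s : Fin r → ℂ) :
    monoMat σ t * monoMat τ s = monoMat (τ * σ) (fun i => t i * s (σ i)) := by
  ext i k
  simp only [Matrix.mul_apply, monoMat_apply, ite_mul, zero_mul]
  rw [Finset.sum_ite_eq]
  simp [Equiv.Perm.mul_apply, mul_ite]
  exact if_congr Iff.rfl rfl rfl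

lemma monoMat_one : monoMat (1 : Equiv.Perm (Fin r)) (fun _ => (1:ℂ)) = 1 := by
  ext i j
  simp [monoMat_apply, Matrix.one_apply, eq_comm]
  exact if_congr Iff.rfl rfl rfl

lemma monoMat_inj {σ σ' : Equiv.Perm (Fin r)} {t t' : Fin r → ℂ} (ht : ∀ i, t i ≠ 0)
    (h : monoMat σ t = monoMat σ' t') : σ = σ' ∧ t = t' := by
  have key : ∀ i, σ i = σ' i ∧ t i = t' i := by
    intro i
    have h1 := congrFun (congrFun h i) (σ i)
    simp only [monoMat_apply, if_pos rfl] at h1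
    by_cases hσ : σ' i = σ i
    · exact ⟨hσ.symm, by rwa [if_pos hσ] at h1⟩
    · rw [if_neg hσ] at h1; exact absurd h1 (ht i)
  exact ⟨Equiv.ext fun i => (key i).1, funext fun i => (key i).2⟩

/-- monomial matrix as an element of GL -/
noncomputable def monoGL (σ : Equiv.Perm (Fin r)) (t : Fin r → ℂˣ) : GL (Fin r) ℂ where
  val := monoMat σ (fun i => t i)
  inv := monoMat σ⁻¹ (fun j => ((t (σ⁻¹ j))⁻¹ : ℂˣ))
  val_inv := by
    rw [monoMat_mul, inv_mul_cancel]
    have h : (fun i => ((t i : ℂ)) * ((t (σ⁻¹ (σ i)))⁻¹ : ℂˣ)) = fun _ => (1:ℂ) := by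
      funext i; simp
    rw [h, monoMat_one]
  inv_val := by
    rw [monoMat_mul, mul_inv_cancel]
    have h : (fun j => (((t (σ⁻¹ j))⁻¹ : ℂˣ) : ℂ) * (t (σ⁻¹ j) : ℂ)) = fun _ => (1:ℂ) := by
      funext j; simp
    rw [h, monoMat_one]

lemma monoGL_val (σ : Equiv.Perm (Fin r)) (t : Fin r → ℂˣ) :
    (monoGL σ t : Matrix (Fin r) (Fin r) ℂ) = monoMat σ (fun i => t i) := rfl

lemma monoGL_mul (σ τ : Equiv.Perm (Fin r)) (t s : Fin r → ℂˣ) :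
    monoGL σ t * monoGL τ s = monoGL (τ * σ) (fun i => t i * s (σ i)) := by
  apply Units.ext
  show (monoGL σ t).val * (monoGL τ s).val = _
  rw [monoGL_val, monoGL_val, monoGL_val, monoMat_mul]
  rfl

lemma monoGL_inv (σ : Equiv.Perm (Fin r)) (t : Fin r → ℂˣ) :
    (monoGL σ t)⁻¹ = monoGL σ⁻¹ (fun j => (t (σ⁻¹ j))⁻¹) := by
  apply Units.ext
  rfl

lemma monoGL_inj {σ σ' : Equiv.Perm (Fin r)} {t t' : Fin r → ℂˣ}
    (h : monoGL σ t = monoGL σ' t') : σ = σ' ∧ t = t' := by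
  have h1 : monoMat σ (fun i => t i) = monoMat σ' (fun i => t' i) :=
    congrArg Units.val h
  obtain ⟨h2, h3⟩ := monoMat_inj (fun i => (t i).ne_zero) h1
  exact ⟨h2, funext fun i => Units.ext (congrFun h3 i)⟩

-- ### action of monomial matrices

/-- diagonal scaling action -/
noncomputable def dAct (t : Fin r → ℂ) (F : MvPolynomial (Fin r) ℂ) : MvPolynomial (Fin r) ℂ :=
  bind₁ (fun i => C (t i) * X i) F

lemma matAct_monoMat (σ : Equiv.Perm (Fin r)) (t : Fin r → ℂ) (F : MvPolynomial (Fin r) ℂ) :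
    matAct (monoMat σ t) F = rename σ (dAct t F) := by
  have key : (bind₁ (fun i => ∑ j, C (monoMat σ t i j) * X j) :
      MvPolynomial (Fin r) ℂ →ₐ[ℂ] MvPolynomial (Fin r) ℂ)
      = (rename σ).comp (bind₁ (fun i => C (t i) * X i)) := by
    apply MvPolynomial.algHom_ext
    intro i
    simp only [bind₁_X_right, AlgHom.comp_apply, map_mul, rename_X, algHom_C]
    show ∑ j, C (if σ i = j then t i else 0) * X j = _
    simp [apply_ite (C (σ := Fin r) (R := ℂ)), ite_mul, Finset.sum_ite_eq]
  show (bind₁ (fun i => ∑ j, C (monoMat σ t i j) * X j)) F = _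
  rw [key]
  rfl

lemma matAct_diag (t : Fin r → ℂ) (F : MvPolynomial (Fin r) ℂ) :
    matAct (monoMat 1 t) F = dAct t F := by
  rw [matAct_monoMat]
  show rename (⇑(1 : Equiv.Perm (Fin r))) _ = _
  rw [Equiv.Perm.coe_one, rename_id, AlgHom.id_apply]

/-- weight product -/
def wprod (t : Fin r → ℂ) (a : Fin r →₀ ℕ) : ℂ := ∏ i, t i ^ a i

lemma wprod_eq_prod_support (t : Fin r → ℂ) (a : Fin r →₀ ℕ) :
    wprod t a = ∏ i ∈ a.support, t i ^ a i := by
  rw [wprod]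
  symm
  apply Finset.prod_subset (Finset.subset_univ _)
  intro i _ hi
  rw [Finsupp.notMem_support_iff] at hi
  rw [hi, pow_zero]

lemma dAct_monomial (t : Fin r → ℂ) (a : Fin r →₀ ℕ) (c : ℂ) :
    dAct t (monomial a c) = monomial a (c * wprod t a) := by
  rw [dAct, bind₁_monomial, wprod_eq_prod_support]
  have h : ∀ i ∈ a.support, (C (t i) * X i) ^ a i
      = C (t i ^ a i) * (X i ^ a i : MvPolynomial (Fin r) ℂ) := by
    intro i _; rw [mul_pow, map_pow]
  rw [Finset.prod_congr rfl h, Finset.prod_mul_distrib, ← map_prod]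
  rw [← mul_assoc, ← C_mul, monomial_eq, C.map_mul, Finsupp.prod]

lemma coeff_dAct (t : Fin r → ℂ) (F : MvPolynomial (Fin r) ℂ) (a : Fin r →₀ ℕ) :
    coeff a (dAct t F) = wprod t a * coeff a F := by
  conv_lhs => rw [F.as_sum]
  rw [dAct, map_sum]
  have h : ∀ b ∈ F.support, (bind₁ fun i => C (t i) * X i) (monomial b (coeff b F))
      = monomial b (coeff b F * wprod t b) := fun b _ => dAct_monomial t b (coeff b F)
  rw [Finset.sum_congr rfl h]
  rw [coeff_sum]
  simp only [coeff_monomial]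
  rw [Finset.sum_ite_eq']
  by_cases ha : a ∈ F.support
  · rw [if_pos ha, mul_comm]
  · rw [if_neg ha, MvPolynomial.notMem_support_iff.mp ha, mul_zero]

lemma dAct_fixed_imp {t : Fin r → ℂ} {F : MvPolynomial (Fin r) ℂ} (h : dAct t F = F) :
    ∀ a ∈ F.support, wprod t a = 1 := by
  intro a ha
  have h2 := congrArg (coeff a) h
  rw [coeff_dAct] at h2
  have hc : coeff a F ≠ 0 := Finsupp.mem_support_iff.mp ha
  exact mul_right_cancel₀ hc (h2.trans (one_mul _).symm)

lemma pow_ineq {e L : ℕ} (he : 1 ≤ e) (hL : 2 ≤ L) : e ^ L + 1 < (e + 1) ^ L := by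
  induction L, hL using Nat.le_induction with
  | base => nlinarith
  | succ L hL IH =>
    have h1 : (e + 1) ^ (L + 1) = (e + 1) ^ L * (e + 1) := pow_succ _ _
    have h2 : e ^ (L + 1) = e ^ L * e := pow_succ _ _
    have he1 : 1 ≤ e ^ L := Nat.one_le_pow _ _ he
    nlinarith

def Kset (e : ℕ) {α : Type} (f : α → α) : Set (α → ℂˣ) :=
  {t | ∀ i, t i ^ e * t (f i) = 1}


lemma powSet_finite (m : ℕ) {α : Type} [Finite α] (hm : m ≠ 0) :
    ({t : α → ℂˣ | ∀ i, t i ^ m = 1}).Finite := by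
  haveI : Finite {u : ℂˣ | u ^ m = 1} := (muSet_finite m hm).to_subtype
  rw [← Set.finite_coe_iff]
  exact Finite.of_injective
    (fun t => (fun i => (⟨t.1 i, t.2 i⟩ : {u : ℂˣ | u ^ m = 1})))
    (by intro t s h; apply Subtype.ext; funext i
        exact congrArg Subtype.val (congrFun h i))

lemma powSet_card (m : ℕ) {α : Type} [Finite α] (hm : m ≠ 0) :
    Nat.card {t : α → ℂˣ | ∀ i, t i ^ m = 1} = m ^ Nat.card α := by
  have E : {t : α → ℂˣ | ∀ i, t i ^ m = 1} ≃ (α → {u : ℂˣ | u ^ m = 1}) :=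
    { toFun := fun t i => ⟨t.1 i, t.2 i⟩
      invFun := fun g => ⟨fun i => (g i).1, fun i => (g i).2⟩
      left_inv := fun t => rfl
      right_inv := fun g => rfl }
  rw [Nat.card_congr E, Nat.card_fun, muSet_card m hm]


theorem Kset_bound (e : ℕ) (he : 2 ≤ e) :
    ∀ (n : ℕ) (α : Type) [Finite α] (f : α → α), Nat.card α = n →
      (Kset e f).Finite ∧ Nat.card (Kset e f) ≤ (e + 1) ^ n ∧
        (f ≠ id → Nat.card (Kset e f) < (e + 1) ^ n) := by
  intro n
  induction n using Nat.strong_induction_on with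
  | _ n IH =>
    intro α _ f hcard
    by_cases hsurj : Function.Surjective f
    · have hinj : Function.Injective f := Finite.injective_iff_surjective.mpr hsurj
      by_cases hid : f = id
      · subst hid
        have hset : Kset e (id : α → α) = {t : α → ℂˣ | ∀ i, t i ^ (e+1) = 1} := by
          ext t
          constructor
          · intro h i
            have := h i
            rwa [id_eq, ← pow_succ] at this
          · intro h i
            rw [id_eq, ← pow_succ]
            exact h i
        refine ⟨?_, ?_, fun h => absurd rfl h⟩
        · rw [hset]; exact powSet_finite (e+1) (by omega)
        · rw [hset, powSet_card (e+1) (by omega), hcard]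
      · -- f bijective, not id
        obtain ⟨i0, hi0⟩ := Function.ne_iff.mp hid
        haveI := Fintype.ofFinite α
        set g : Equiv.Perm α := Equiv.ofBijective f ⟨hinj, hsurj⟩ with hgdef
        have hg : ∀ (k : ℕ) (x : α), (g ^ k) x = f^[k] x := by
          intro k
          induction k with
          | zero => intro x; rfl
          | succ k IHk =>
            intro x
            rw [Function.iterate_succ_apply, pow_succ, Equiv.Perm.mul_apply]
            have hgx : g x = f x := rfl
            rw [hgx, IHk]
        have hper : i0 ∈ Function.periodicPts f := by
          refine Function.mk_mem_periodicPts (orderOf_pos g) ?_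
          show f^[orderOf g] i0 = i0
          rw [← hg, pow_orderOf_eq_one]
          rfl
        set L := Function.minimalPeriod f i0 with hLdef
        have hL0 : 0 < L := Function.minimalPeriod_pos_of_mem_periodicPts hper
        have hL1 : L ≠ 1 := by
          intro h
          apply hi0
          have := Function.minimalPeriod_eq_one_iff_isFixedPt.mp h
          exact this
        have hL2 : 2 ≤ L := by omega
        have hiterL : f^[L] i0 = i0 := Function.iterate_minimalPeriod
        have iter_inj : ∀ a b, a < L → b < L → f^[a] i0 = f^[b] i0 → a = b := by
          have key : ∀ a b, a < b → b < L → f^[a] i0 ≠ f^[b] i0 := by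
            intro a b hab hbL heq
            have h1 : f^[a] (f^[b-a] i0) = f^[a] i0 := by
              rw [← Function.iterate_add_apply, show a + (b-a) = b by omega]
              exact heq.symm
            have h2 : f^[b-a] i0 = i0 := hinj.iterate a h1
            have h3 : Function.IsPeriodicPt f (b-a) i0 := h2
            have := h3.minimalPeriod_le (by omega)
            omega
          intro a b ha hb heq
          rcases lt_trichotomy a b with h|h|h
          · exact absurd heq (key a b h hb)
          · exact h
          · exact absurd heq.symm (key b a h ha)
        set C : Set α := (fun k => f^[k] i0) '' (Set.Iio L) with hCdef
        have hmemC : ∀ k, k < L → f^[k] i0 ∈ C := fun k hk => ⟨k, hk, rfl⟩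
        have hCf : ∀ y, f y ∈ C → y ∈ C := by
          intro y hy
          obtain ⟨k, hk, hk2⟩ := hy
          have hk' : k < L := hk
          rcases Nat.eq_zero_or_pos k with h0 | hpos
          · subst h0
            have h5 : f (f^[L-1] i0) = f y := by
              rw [← Function.iterate_succ_apply' f (L-1) i0, show (L-1).succ = L by omega, hiterL]
              exact hk2
            rw [← hinj h5]
            exact hmemC _ (by omega)
          · have h5 : f (f^[k-1] i0) = f y := by
              rw [← Function.iterate_succ_apply' f (k-1) i0, show (k-1).succ = k by omega]
              exact hk2
            rw [← hinj h5]
            exact hmemC _ (by omega)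
        have hCcard : Nat.card C = L := by
          have hbij : Function.Bijective (fun k : Fin L => (⟨f^[k.1] i0, hmemC k.1 k.2⟩ : C)) := by
            constructor
            · intro a b hab
              have := congrArg Subtype.val hab
              exact Fin.ext (iter_inj a.1 b.1 a.2 b.2 this)
            · rintro ⟨x, ⟨k, hk, rfl⟩⟩
              exact ⟨⟨k, hk⟩, rfl⟩
          rw [← Nat.card_eq_of_bijective _ hbij, Nat.card_eq_fintype_card, Fintype.card_fin]
        have hfC' : ∀ x : {x : α // x ∉ C}, f x.1 ∉ C := fun x h => x.2 (hCf x.1 h)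
        set f'' : {x : α // x ∉ C} → {x : α // x ∉ C} := fun x => ⟨f x.1, hfC' x⟩ with hf''def
        have hLn : L ≤ n := by
          rw [← hcard, ← hCcard]
          exact Nat.card_le_card_of_injective (Subtype.val : C → α) Subtype.val_injective
        have hcard'' : Nat.card {x : α // x ∉ C} = n - L := by
          haveI : DecidablePred (· ∈ C) := Classical.decPred _
          have h6 : Nat.card {x : α // x ∉ C} = Nat.card α - Nat.card {x : α // x ∈ C} := by
            rw [Nat.card_eq_fintype_card, Nat.card_eq_fintype_card, Nat.card_eq_fintype_card]
            exact Fintype.card_subtype_compl _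
          have h7 : Nat.card {x : α // x ∈ C} = L := by rw [← hCcard]
          rw [h6, h7, hcard]
        have hzpow : ∀ t ∈ Kset e f, ∀ (k : ℕ) (x : α), t (f^[k] x) = t x ^ ((-(e:ℤ)) ^ k) := by
          intro t ht k
          induction k with
          | zero => intro x; simp
          | succ k IHk =>
            intro x
            rw [Function.iterate_succ_apply']
            have h1 : t (f (f^[k] x)) = t (f^[k] x) ^ (-(e:ℤ)) := by
              rw [zpow_neg, zpow_natCast]
              exact eq_inv_of_mul_eq_one_right (ht (f^[k] x))
            rw [h1, IHk, ← zpow_mul, ← pow_succ]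
        set M : ℤ := (-(e:ℤ)) ^ L - 1 with hMdef
        have hcast : ((e ^ L : ℕ) : ℤ) = (e:ℤ) ^ L := by push_cast; ring
        have h4eL : (4:ℤ) ≤ (e:ℤ) ^ L := by
          have h2e : (2:ℤ) ≤ (e:ℤ) := by exact_mod_cast he
          calc (4:ℤ) = 2^2 := by norm_num
            _ ≤ (2:ℤ)^L := pow_le_pow_right₀ (by norm_num) hL2
            _ ≤ (e:ℤ)^L := pow_le_pow_left₀ (by norm_num) h2e L
        have hMval : M = (e:ℤ)^L - 1 ∨ M = -((e:ℤ)^L) - 1 := by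
          rcases Nat.even_or_odd L with hEv | hOd
          · left; rw [hMdef, hEv.neg_pow]
          · right; rw [hMdef, hOd.neg_pow]
        have hMabs : M.natAbs ≤ e ^ L + 1 := by
          rcases hMval with h | h <;> omega
        have hMne : M ≠ 0 := by
          rcases hMval with h | h <;> omega
        set m := M.natAbs with hmdef
        have hm0 : m ≠ 0 := fun h => hMne (Int.natAbs_eq_zero.mp h)
        have hu : ∀ t ∈ Kset e f, (t i0) ^ m = 1 := by
          intro t ht
          have h1 : t i0 ^ ((-(e:ℤ))^L) = t i0 := by
            rw [← hzpow t ht L i0, hiterL]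
          have h2 : t i0 ^ M = 1 := by
            rw [hMdef, zpow_sub, h1, zpow_one]; exact mul_inv_cancel _
          rcases Int.natAbs_eq M with h | h
          · rw [← zpow_natCast, ← h, h2]
          · have h8 : ((m : ℤ)) = -M := by omega
            rw [← zpow_natCast, h8, zpow_neg, h2, inv_one]
        obtain ⟨hfin'', hle'', _⟩ := IH (n - L) (by omega) {x : α // x ∉ C} f'' hcard''
        haveI : Finite ↥(Kset e f'') := hfin''.to_subtype
        haveI : Finite ↥{u : ℂˣ | u ^ m = 1} := (muSet_finite m hm0).to_subtype
        set Ψ : ↥(Kset e f) → ↥(Kset e f'') × ↥{u : ℂˣ | u ^ m = 1} := fun t =>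
          (⟨fun x => t.1 x.1, fun x => t.2 x.1⟩, ⟨t.1 i0, hu t.1 t.2⟩) with hΨdef
        have hΨinj : Function.Injective Ψ := by
          intro t s h
          rw [hΨdef, Prod.ext_iff] at h
          obtain ⟨h1, h2⟩ := h
          have h1' : ∀ x (hx : x ∉ C), t.1 x = s.1 x := fun x hx =>
            congrFun (congrArg Subtype.val h1) ⟨x, hx⟩
          have h2' : t.1 i0 = s.1 i0 := congrArg Subtype.val h2
          apply Subtype.ext; funext x
          by_cases hx : x ∈ C
          · obtain ⟨k, hk, rfl⟩ := hx
            rw [hzpow t.1 t.2 k i0, hzpow s.1 s.2 k i0, h2']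
          · exact h1' x hx
        have hfin : (Kset e f).Finite :=
          Set.finite_coe_iff.mp (Finite.of_injective Ψ hΨinj)
        have hcardle : Nat.card (Kset e f) ≤ (e+1)^(n-L) * m := by
          calc Nat.card (Kset e f)
              ≤ Nat.card (↥(Kset e f'') × ↥{u : ℂˣ | u ^ m = 1}) :=
                Nat.card_le_card_of_injective Ψ hΨinj
            _ = Nat.card (Kset e f'') * m := by rw [Nat.card_prod, muSet_card m hm0]
            _ ≤ (e+1)^(n-L) * m := Nat.mul_le_mul_right _ hle''
        have hlt : Nat.card (Kset e f) < (e+1)^n := by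
          have hp : 0 < (e+1)^(n-L) := Nat.pow_pos (by omega)
          have hstep : (e+1)^(n-L) * m < (e+1)^(n-L) * (e+1)^L := by
            have hmlt : m < (e+1)^L := lt_of_le_of_lt hMabs (pow_ineq (by omega) hL2)
            exact mul_lt_mul_of_pos_left hmlt hp
          have heq : (e+1)^(n-L) * (e+1)^L = (e+1)^n := by
            rw [← pow_add]
            congr 1
            omega
          omega
        exact ⟨hfin, le_of_lt hlt, fun _ => hlt⟩
    · -- non-surjective case
      rw [Function.Surjective] at hsurj
      push_neg at hsurj
      obtain ⟨i0, hi0⟩ := hsurj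
      have hn1 : 1 ≤ n := by
        rw [← hcard]
        have hne : Nonempty α := ⟨i0⟩
        have := Nat.card_pos (α := α)
        omega
      have hfii : f i0 ≠ i0 := hi0 i0
      have hf' : ∀ x : {x : α // x ≠ i0}, f x.1 ≠ i0 := fun x => hi0 x.1
      set f' : {x : α // x ≠ i0} → {x : α // x ≠ i0} := fun x => ⟨f x.1, hf' x⟩ with hf'def
      have hcard' : Nat.card {x : α // x ≠ i0} = n - 1 := by
        haveI := Fintype.ofFinite α
        haveI : DecidableEq α := Classical.decEq α
        rw [Nat.card_eq_fintype_card]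
        have h1 : Fintype.card {x : α // x ≠ i0} =
            Fintype.card α - Fintype.card {x : α // x = i0} := Fintype.card_subtype_compl _
        have h2 : Fintype.card {x : α // x = i0} = 1 := Fintype.card_subtype_eq i0
        rw [← hcard, Nat.card_eq_fintype_card]
        omega
      obtain ⟨hfin', hle', _⟩ := IH (n-1) (by omega) {x : α // x ≠ i0} f' hcard'
      have hroot : ∀ c : ℂˣ, ∃ u : ℂˣ, u ^ e = c := exists_unit_pow e (by omega)
      set root : ℂˣ → ℂˣ := fun c => (hroot c).choose with hrootdef
      have root_pow : ∀ c, (root c) ^ e = c := fun c => (hroot c).choose_spec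
      haveI : Finite ↥(Kset e f') := hfin'.to_subtype
      haveI : Finite ↥{u : ℂˣ | u ^ e = 1} := (muSet_finite e (by omega)).to_subtype
      set Φ : ↥(Kset e f) → ↥(Kset e f') × ↥{u : ℂˣ | u ^ e = 1} := fun t =>
        (⟨fun x => t.1 x.1, fun x => t.2 x.1⟩,
         ⟨t.1 i0 * (root ((t.1 (f i0))⁻¹))⁻¹, by
            show (t.1 i0 * (root ((t.1 (f i0))⁻¹))⁻¹) ^ e = 1
            rw [mul_pow, inv_pow, root_pow, inv_inv]
            exact t.2 i0⟩) with hΦdef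
      have hΦinj : Function.Injective Φ := by
        intro t s h
        rw [hΦdef, Prod.ext_iff] at h
        obtain ⟨h1, h2⟩ := h
        have h1' : ∀ x (hx : x ≠ i0), t.1 x = s.1 x := fun x hx =>
          congrFun (congrArg Subtype.val h1) ⟨x, hx⟩
        have h2' : t.1 i0 * (root ((t.1 (f i0))⁻¹))⁻¹ = s.1 i0 * (root ((s.1 (f i0))⁻¹))⁻¹ :=
          congrArg Subtype.val h2
        have h3 : t.1 (f i0) = s.1 (f i0) := h1' (f i0) hfii
        rw [h3] at h2'
        have h4 : t.1 i0 = s.1 i0 := mul_right_cancel h2'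
        apply Subtype.ext; funext x
        by_cases hx : x = i0
        · rw [hx]; exact h4
        · exact h1' x hx
      have hfin : (Kset e f).Finite :=
        Set.finite_coe_iff.mp (Finite.of_injective Φ hΦinj)
      have hcardle : Nat.card (Kset e f) ≤ (e+1)^(n-1) * e := by
        calc Nat.card (Kset e f)
            ≤ Nat.card (↥(Kset e f') × ↥{u : ℂˣ | u ^ e = 1}) :=
              Nat.card_le_card_of_injective Φ hΦinj
          _ = Nat.card (Kset e f') * e := by rw [Nat.card_prod, muSet_card e (by omega)]
          _ ≤ (e+1)^(n-1) * e := Nat.mul_le_mul_right _ hle'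
      have hlt : Nat.card (Kset e f) < (e+1)^n := by
        have hp : 0 < (e+1)^(n-1) := Nat.pow_pos (by omega)
        have hstep : (e+1)^(n-1) * e < (e+1)^(n-1) * (e+1) :=
          mul_lt_mul_of_pos_left (by omega) hp
        have heq : (e+1)^(n-1) * (e+1) = (e+1)^n := by
          rw [← pow_succ]
          congr 1
          omega
        omega
      exact ⟨hfin, le_of_lt hlt, fun _ => hlt⟩

lemma homog_degree_sum {r d : ℕ} {F : MvPolynomial (Fin r) ℂ} (hhom : F.IsHomogeneous d)
    {a : Fin r →₀ ℕ} (ha : coeff a F ≠ 0) : ∑ k : Fin r, a k = d := by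
  have h1 := hhom ha
  rw [Finsupp.weight_apply, Finsupp.sum] at h1
  simp only [Pi.one_apply, smul_eq_mul, mul_one] at h1
  rw [← h1]
  exact (Finset.sum_subset (Finset.subset_univ _)
    (fun k _ hk => Finsupp.notMem_support_iff.mp hk)).symm

lemma sum_single_univ {r : ℕ} (i : Fin r) (m : ℕ) :
    ∑ k : Fin r, Finsupp.single i m k = m := by
  simp [Finsupp.single_apply, Finset.sum_ite_eq]

lemma smooth_witness {r d : ℕ} (hd : 1 ≤ d) {F : MvPolynomial (Fin r) ℂ}
    (hhom : F.IsHomogeneous d) (hsm : IsSmoothForm F) (i : Fin r) :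
    ∃ j : Fin r, coeff (Finsupp.single i (d-1) + Finsupp.single j 1) F ≠ 0 := by
  by_contra hall
  push_neg at hall
  set x₀ : Fin r → ℂ := Pi.single i 1 with hx₀
  have hx₀i : x₀ i = 1 := Pi.single_eq_same i 1
  have hx₀k : ∀ k, k ≠ i → x₀ k = 0 := fun k hk => Pi.single_eq_of_ne hk 1
  have hev : ∀ j, eval x₀ (pderiv j F) = 0 := by
    intro j
    conv_lhs => rw [F.as_sum]
    rw [map_sum, map_sum]
    apply Finset.sum_eq_zero
    intro a ha
    rw [pderiv_monomial, eval_monomial]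
    set b : Fin r →₀ ℕ := a - Finsupp.single j 1 with hb
    by_cases haj : a j = 0
    · rw [haj]; simp
    · by_cases hbad : ∃ k, k ≠ i ∧ b k ≠ 0
      · obtain ⟨k, hki, hk⟩ := hbad
        have hmem : k ∈ b.support := Finsupp.mem_support_iff.mpr hk
        have hzero : b.prod (fun n e => x₀ n ^ e) = 0 := by
          rw [Finsupp.prod]
          apply Finset.prod_eq_zero hmem
          rw [hx₀k k hki]
          exact zero_pow hk
        rw [hzero, mul_zero]
      · push_neg at hbad
        have hsub : ∀ k, b k = a k - Finsupp.single j 1 k :=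
          fun k => Finsupp.tsub_apply _ _ _
        have hdeg : ∑ k : Fin r, a k = d :=
          homog_degree_sum hhom (MvPolynomial.mem_support_iff.mp ha)
        have haeq : a = Finsupp.single i (d-1) + Finsupp.single j 1 := by
          by_cases hji : j = i
          · subst hji
            have hak : ∀ k, k ≠ j → a k = 0 := by
              intro k hk
              have h2 := hbad k hk
              rw [hsub k, Finsupp.single_apply, if_neg (fun h => hk h.symm)] at h2
              omega
            have haform : a = Finsupp.single j (a j) := by
              ext k
              rw [Finsupp.single_apply]
              by_cases hkj : j = k
              · rw [if_pos hkj, hkj]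
              · rw [if_neg hkj]
                exact hak k (fun h => hkj h.symm)
            have hdeg2 : a j = d := by
              rw [haform] at hdeg
              rw [sum_single_univ] at hdeg
              exact hdeg
            rw [haform, hdeg2, ← Finsupp.single_add]
            congr 1
            omega
          · have hak : ∀ k, k ≠ i → k ≠ j → a k = 0 := by
              intro k hki hkj
              have h2 := hbad k hki
              rw [hsub k, Finsupp.single_apply, if_neg (fun h => hkj h.symm)] at h2
              omega
            have haj1 : a j = 1 := by
              have h2 := hbad j (fun h => hji h)
              rw [hsub j, Finsupp.single_apply, if_pos rfl] at h2
              omega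
            have haform : a = Finsupp.single i (a i) + Finsupp.single j 1 := by
              ext k
              rw [Finsupp.add_apply, Finsupp.single_apply, Finsupp.single_apply]
              by_cases hki : i = k
              · rw [if_pos hki, if_neg (by rw [← hki]; exact fun h => hji h), ← hki]
                omega
              · rw [if_neg hki]
                by_cases hkj : j = k
                · rw [if_pos hkj, ← hkj, haj1]
                · rw [if_neg hkj]
                  rw [hak k (fun h => hki h.symm) (fun h => hkj h.symm)]
                  simp
            have hdeg2 : a i + 1 = d := by
              rw [haform] at hdeg
              rw [Finset.sum_congr rfl (fun k _ => Finsupp.add_apply _ _ _),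
                Finset.sum_add_distrib, sum_single_univ, sum_single_univ] at hdeg
              exact hdeg
            have hai : a i = d - 1 := by omega
            rw [haform, hai]
        have hcz : coeff a F = 0 := by rw [haeq]; exact hall j
        rw [hcz]
        ring
  have := hsm x₀ hev
  have := congrFun this i
  rw [hx₀i] at this
  exact one_ne_zero this

-- new helpers
lemma wprod_single (t : Fin r → ℂ) (i : Fin r) (m : ℕ) :
    wprod t (Finsupp.single i m) = t i ^ m := by
  rw [wprod]
  have h : ∀ k, t k ^ (Finsupp.single i m) k = if i = k then t i ^ m else 1 := by
    intro k
    rw [Finsupp.single_apply]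
    by_cases hik : i = k
    · rw [if_pos hik, if_pos hik, hik]
    · rw [if_neg hik, if_neg hik, pow_zero]
  rw [Finset.prod_congr rfl (fun k _ => h k), Finset.prod_ite_eq]
  simp

lemma wprod_add (t : Fin r → ℂ) (a b : Fin r →₀ ℕ) :
    wprod t (a + b) = wprod t a * wprod t b := by
  rw [wprod, wprod, wprod, ← Finset.prod_mul_distrib]
  apply Finset.prod_congr rfl
  intro k _
  rw [Finsupp.add_apply, pow_add]

lemma eq_single_of_dvd {d : ℕ} (hd : d ≠ 0) (a : Fin r →₀ ℕ)
    (hsum : ∑ k, a k = d) (hdvd : ∀ k, d ∣ a k) : ∃ i, a = Finsupp.single i d := by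
  have hne : ∃ i, a i ≠ 0 := by
    by_contra hno
    push_neg at hno
    rw [Finset.sum_congr rfl (fun k _ => hno k), Finset.sum_const, smul_zero] at hsum
    exact hd hsum.symm
  obtain ⟨i, hi⟩ := hne
  have hile : a i ≤ d := by
    rw [← hsum]
    exact Finset.single_le_sum (fun k _ => Nat.zero_le _) (Finset.mem_univ i)
  have hige : d ≤ a i := Nat.le_of_dvd (Nat.pos_of_ne_zero hi) (hdvd i)
  have hai : a i = d := le_antisymm hile hige
  have hrest : ∀ k, k ≠ i → a k = 0 := by
    intro k hk
    have h1 : a i + ∑ x ∈ Finset.univ.erase i, a x = d := by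
      rw [Finset.add_sum_erase _ _ (Finset.mem_univ i)]
      exact hsum
    have h2 : ∑ x ∈ Finset.univ.erase i, a x = 0 := by omega
    have := Finset.sum_eq_zero_iff.mp h2 k (Finset.mem_erase.mpr ⟨hk, Finset.mem_univ k⟩)
    exact this
  refine ⟨i, ?_⟩
  ext k
  rw [Finsupp.single_apply]
  by_cases hk : i = k
  · rw [if_pos hk, ← hk, hai]
  · rw [if_neg hk]
    exact hrest k (fun h => hk h.symm)

lemma dAct_fermat {d : ℕ} (t : Fin r → ℂˣ) (ht : ∀ i, t i ^ d = 1) :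
    dAct (fun i => (t i : ℂ)) (fermatForm r d) = fermatForm r d := by
  rw [dAct, fermatForm, map_sum]
  apply Finset.sum_congr rfl
  intro i _
  rw [map_pow, bind₁_X_right, mul_pow, ← map_pow]
  have h : ((t i : ℂ)) ^ d = 1 := by
    have := congrArg (Units.val) (ht i)
    push_cast at this
    exact this
  rw [h, map_one, one_mul]

lemma rename_fermat {d : ℕ} (σ : Equiv.Perm (Fin r)) :
    rename σ (fermatForm r d) = fermatForm r d := by
  rw [fermatForm, map_sum]
  have h : ∀ i, rename (⇑σ) ((X i : MvPolynomial (Fin r) ℂ) ^ d) = X (σ i) ^ d := by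
    intro i; rw [map_pow, rename_X]
  rw [Finset.sum_congr rfl (fun i _ => h i)]
  exact Equiv.sum_comp σ (fun i => (X i : MvPolynomial (Fin r) ℂ) ^ d)

lemma matAct_monoMat_fermat {d : ℕ} (σ : Equiv.Perm (Fin r)) (t : Fin r → ℂˣ)
    (ht : ∀ i, t i ^ d = 1) :
    matAct (monoMat σ (fun i => (t i : ℂ))) (fermatForm r d) = fermatForm r d := by
  rw [matAct_monoMat, dAct_fermat t ht, rename_fermat]

end SPAux

/-- if `Aut(F)` consists of semi-permutations then `|Aut(F)| ≤ d^r·r!`,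
with equality exactly for the Fermat form. -/
theorem semi_permutation_aut_bound
    (r d : ℕ) (hr : 2 ≤ r) (hd : 3 ≤ d)
    (F : MvPolynomial (Fin r) ℂ) (hhom : F.IsHomogeneous d) (hsm : IsSmoothForm F)
    (hmono : ∀ A ∈ formAut F, IsSemiPermutation (A : Matrix (Fin r) (Fin r) ℂ)) :
    (formAut F : Set (GL (Fin r) ℂ)).Finite ∧
    Nat.card (formAut F) ≤ d ^ r * r.factorial ∧
    (Nat.card (formAut F) = d ^ r * r.factorial ↔ FormIso F (fermatForm r d)) := by
  classical
  have hd0 : d ≠ 0 := by omega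
  have he2 : 2 ≤ d - 1 := by omega
  have hde : d - 1 + 1 = d := by omega
  -- decomposition of automorphisms into monomial data
  have hmono' : ∀ A : GL (Fin r) ℂ, A ∈ formAut F →
      ∃ p : Equiv.Perm (Fin r) × (Fin r → ℂˣ), A = monoGL p.1 p.2 := by
    intro A hA
    obtain ⟨σ, dvec, hnz, hform⟩ := hmono A hA
    refine ⟨⟨σ, fun i => Units.mk0 (dvec i) (hnz i)⟩, Units.ext ?_⟩
    show (A : Matrix (Fin r) (Fin r) ℂ) = _
    rw [monoGL_val]
    ext i j
    rw [monoMat_apply]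
    exact hform i j
  set dec : GL (Fin r) ℂ → Equiv.Perm (Fin r) × (Fin r → ℂˣ) := fun A =>
    if h : ∃ p : Equiv.Perm (Fin r) × (Fin r → ℂˣ), A = monoGL p.1 p.2
    then h.choose else ⟨1, fun _ => 1⟩ with hdecdef
  have hdec : ∀ A ∈ formAut F, A = monoGL (dec A).1 (dec A).2 := by
    intro A hA
    have h := hmono' A hA
    rw [hdecdef]
    simp only [dif_pos h]
    exact h.choose_spec
  have hdec_eq : ∀ (σ : Equiv.Perm (Fin r)) (t : Fin r → ℂˣ),
      dec (monoGL σ t) = (σ, t) := by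
    intro σ t
    have hex : ∃ p : Equiv.Perm (Fin r) × (Fin r → ℂˣ),
        monoGL σ t = monoGL p.1 p.2 := ⟨(σ, t), rfl⟩
    rw [hdecdef]
    simp only [dif_pos hex]
    obtain ⟨h1, h2⟩ := monoGL_inj hex.choose_spec
    exact Prod.ext h1.symm h2.symm
  -- membership of diagonal matrices
  have hmemKF : ∀ t : Fin r → ℂˣ,
      (monoGL 1 t ∈ formAut F) ↔ dAct (fun k => (t k : ℂ)) F = F := by
    intro t
    constructor
    · intro ht
      have h2 : matAct ((monoGL 1 t : GL (Fin r) ℂ) : Matrix (Fin r) (Fin r) ℂ) F = F := ht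
      rwa [monoGL_val, matAct_diag] at h2
    · intro ht
      show matAct _ F = F
      rw [monoGL_val, matAct_diag]
      exact ht
  set KF : Set (Fin r → ℂˣ) := {t | monoGL 1 t ∈ formAut F} with hKFdef
  -- smoothness witnesses
  have hwit : ∀ i : Fin r, ∃ j : Fin r,
      MvPolynomial.coeff (Finsupp.single i (d-1) + Finsupp.single j 1) F ≠ 0 :=
    fun i => smooth_witness (by omega) hhom hsm i
  set jfun : Fin r → Fin r := fun i =>
    if MvPolynomial.coeff (Finsupp.single i d) F ≠ 0 then i else (hwit i).choose with hjdef
  have hjprop : ∀ i,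
      MvPolynomial.coeff (Finsupp.single i (d-1) + Finsupp.single (jfun i) 1) F ≠ 0 := by
    intro i
    rw [hjdef]
    by_cases h : MvPolynomial.coeff (Finsupp.single i d) F ≠ 0
    · simp only [if_pos h]
      rw [← Finsupp.single_add, hde]
      exact h
    · simp only [if_neg h]
      exact (hwit i).choose_spec
  have hjid : ∀ i, jfun i = i → MvPolynomial.coeff (Finsupp.single i d) F ≠ 0 := by
    intro i hji
    have h := hjprop i
    rw [hji, ← Finsupp.single_add, hde] at h
    exact h
  have hKF_sub : KF ⊆ Kset (d-1) jfun := by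
    intro t ht i
    have hAct : dAct (fun k => (t k : ℂ)) F = F := (hmemKF t).mp ht
    have hw := dAct_fixed_imp hAct _ (MvPolynomial.mem_support_iff.mpr (hjprop i))
    rw [wprod_add, wprod_single, wprod_single, pow_one] at hw
    apply Units.ext
    push_cast
    exact hw
  obtain ⟨hKsFin, hKsLe, hKsLt⟩ :=
    Kset_bound (d-1) he2 r (Fin r) jfun (by simp)
  rw [hde] at hKsLe hKsLt
  have hKFfin : KF.Finite := hKsFin.subset hKF_sub
  have hKFcardle : Nat.card KF ≤ Nat.card (Kset (d-1) jfun) := by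
    rw [Nat.card_coe_set_eq, Nat.card_coe_set_eq]
    exact Set.ncard_le_ncard hKF_sub hKsFin
  have hKFle : Nat.card KF ≤ d ^ r := le_trans hKFcardle hKsLe
  -- base points for each permutation
  set pk : Equiv.Perm (Fin r) → GL (Fin r) ℂ := fun σ =>
    if h : ∃ A, A ∈ formAut F ∧ (dec A).1 = σ then h.choose else 1 with hpkdef
  have hpk : ∀ σ, (∃ A, A ∈ formAut F ∧ (dec A).1 = σ) →
      pk σ ∈ formAut F ∧ (dec (pk σ)).1 = σ := by
    intro σ h
    rw [hpkdef]
    simp only [dif_pos h]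
    exact ⟨h.choose_spec.1, h.choose_spec.2⟩
  -- key decomposition
  have key : ∀ A : GL (Fin r) ℂ, ∀ hA : A ∈ formAut F,
      (dec (A * (pk (dec A).1)⁻¹)).2 ∈ KF ∧
      A = monoGL 1 ((dec (A * (pk (dec A).1)⁻¹)).2) * pk (dec A).1 := by
    intro A hA
    obtain ⟨hpkmem, hpkσ⟩ := hpk (dec A).1 ⟨A, hA, rfl⟩
    have hBmem : A * (pk (dec A).1)⁻¹ ∈ formAut F := mul_mem hA (inv_mem hpkmem)
    have hB : A * (pk (dec A).1)⁻¹ =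
        monoGL 1 (fun i => (dec A).2 i * ((dec (pk (dec A).1)).2 i)⁻¹) := by
      have e1 : A * (pk (dec A).1)⁻¹ = monoGL (dec A).1 (dec A).2
          * (monoGL (dec (pk (dec A).1)).1 (dec (pk (dec A).1)).2)⁻¹ :=
        congrArg₂ (fun X Y => X * Y⁻¹) (hdec A hA) (hdec _ hpkmem)
      rw [e1, hpkσ, monoGL_inv, monoGL_mul]
      congr 1
      · exact inv_mul_cancel _
      · funext i
        rw [← Equiv.Perm.mul_apply, inv_mul_cancel, Equiv.Perm.one_apply]
    have hu : (dec (A * (pk (dec A).1)⁻¹)).2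
        = fun i => (dec A).2 i * ((dec (pk (dec A).1)).2 i)⁻¹ := by
      rw [hB, hdec_eq]
    constructor
    · show monoGL 1 _ ∈ formAut F
      rw [hu, ← hB]
      exact hBmem
    · rw [hu, ← hB, inv_mul_cancel_right]
  haveI hKFfinite : Finite ↥KF := hKFfin.to_subtype
  set Φ : {A : GL (Fin r) ℂ // A ∈ formAut F} → Equiv.Perm (Fin r) × ↥KF := fun A =>
    ((dec A.1).1, ⟨(dec (A.1 * (pk (dec A.1).1)⁻¹)).2, (key A.1 A.2).1⟩) with hΦdef
  have hΦinj : Function.Injective Φ := by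
    intro A B h
    rw [hΦdef] at h
    simp only [Prod.mk.injEq, Subtype.mk.injEq] at h
    obtain ⟨h1, h2⟩ := h
    apply Subtype.ext
    rw [(key A.1 A.2).2, (key B.1 B.2).2, h2, h1]
  haveI hGfin : Finite {A : GL (Fin r) ℂ // A ∈ formAut F} :=
    Finite.of_injective Φ hΦinj
  have hGsetfin : (formAut F : Set (GL (Fin r) ℂ)).Finite := by
    rw [← Set.finite_coe_iff]
    exact hGfin
  have hcard1 : Nat.card (formAut F) ≤ r.factorial * Nat.card KF := by
    calc Nat.card (formAut F)
        ≤ Nat.card (Equiv.Perm (Fin r) × ↥KF) := Nat.card_le_card_of_injective Φ hΦinj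
      _ = r.factorial * Nat.card KF := by
          rw [Nat.card_prod, Nat.card_eq_fintype_card, Fintype.card_perm, Fintype.card_fin]
  have hbound : Nat.card (formAut F) ≤ d ^ r * r.factorial := by
    calc Nat.card (formAut F) ≤ r.factorial * Nat.card KF := hcard1
      _ ≤ r.factorial * d ^ r := Nat.mul_le_mul_left _ hKFle
      _ = d ^ r * r.factorial := Nat.mul_comm _ _
  -- forward direction of the equivalence
  have forward : Nat.card (formAut F) = d ^ r * r.factorial → FormIso F (fermatForm r d) := by
    intro heq
    have hKFge : d ^ r ≤ Nat.card KF := by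
      have h1 := hcard1
      rw [heq] at h1
      have h2 : 0 < r.factorial := Nat.factorial_pos r
      have h3 : r.factorial * d ^ r ≤ r.factorial * Nat.card KF := by
        calc r.factorial * d ^ r = d ^ r * r.factorial := Nat.mul_comm _ _
          _ ≤ r.factorial * Nat.card KF := h1
      exact Nat.le_of_mul_le_mul_left h3 h2
    have hjfid : jfun = id := by
      by_contra hne
      have hlt := hKsLt hne
      omega
    have hallsingle : ∀ i, MvPolynomial.coeff (Finsupp.single i d) F ≠ 0 := by
      intro i
      exact hjid i (by rw [hjfid]; rfl)
    have hKsetEq : Kset (d-1) (id : Fin r → Fin r) =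
        {t : Fin r → ℂˣ | ∀ i, t i ^ d = 1} := by
      ext t
      constructor
      · intro h i
        have h2 := h i
        rw [← hde, pow_succ]
        exact h2
      · intro h i
        show t i ^ (d-1) * t (id i) = 1
        have h2 := h i
        rw [← hde, pow_succ] at h2
        exact h2
    have hTfin : ({t : Fin r → ℂˣ | ∀ i, t i ^ d = 1}).Finite :=
      powSet_finite (α := Fin r) d hd0
    have hTcard : Nat.card {t : Fin r → ℂˣ | ∀ i, t i ^ d = 1} = d ^ r := by
      rw [powSet_card d hd0]
      simp
    have hKF_subT : KF ⊆ {t : Fin r → ℂˣ | ∀ i, t i ^ d = 1} := by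
      rw [← hKsetEq, ← hjfid]
      exact hKF_sub
    have hKFeqT : KF = {t : Fin r → ℂˣ | ∀ i, t i ^ d = 1} := by
      refine Set.eq_of_subset_of_ncard_le hKF_subT ?_ hTfin
      have h4 : ({t : Fin r → ℂˣ | ∀ i, t i ^ d = 1}).ncard = d ^ r :=
        (Nat.card_coe_set_eq _).symm.trans hTcard
      have h5 : d ^ r ≤ KF.ncard := by
        rw [← Nat.card_coe_set_eq]
        exact hKFge
      rw [h4]
      exact h5
    have hdvd : ∀ a ∈ F.support, ∀ i : Fin r, d ∣ a i := by
      intro a ha i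
      have hζ : IsPrimitiveRoot (Complex.exp (2 * Real.pi * Complex.I / d)) d :=
        Complex.isPrimitiveRoot_exp d hd0
      have hζ0 : Complex.exp (2 * Real.pi * Complex.I / d) ≠ 0 := Complex.exp_ne_zero _
      set ζu : ℂˣ := Units.mk0 _ hζ0 with hζu
      set t : Fin r → ℂˣ := fun k => if k = i then ζu else 1 with htdef
      have htT : t ∈ KF := by
        rw [hKFeqT]
        intro k
        rw [htdef]
        by_cases hk : k = i
        · simp only [if_pos hk]
          apply Units.ext
          push_cast
          exact hζ.pow_eq_one
        · simp only [if_neg hk, one_pow]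
      have hAct : dAct (fun k => (t k : ℂ)) F = F := (hmemKF t).mp htT
      have hw := dAct_fixed_imp hAct a ha
      have hwp : wprod (fun k => (t k : ℂ)) a
          = Complex.exp (2 * Real.pi * Complex.I / d) ^ a i := by
        rw [wprod]
        have h6 : ∀ k, ((t k : ℂ)) ^ a k
            = if k = i then Complex.exp (2 * Real.pi * Complex.I / d) ^ a i else 1 := by
          intro k
          rw [htdef]
          by_cases hk : k = i
          · simp only [if_pos hk, hk]
            rfl
          · simp only [if_neg hk]
            norm_num
        rw [Finset.prod_congr rfl (fun k _ => h6 k), Finset.prod_ite_eq']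
        simp
      rw [hwp] at hw
      exact hζ.dvd_of_pow_eq_one _ hw
    have hshape : ∀ a ∈ F.support, ∃ i, a = Finsupp.single i d := fun a ha =>
      eq_single_of_dvd hd0 a
        (homog_degree_sum hhom (MvPolynomial.mem_support_iff.mp ha)) (hdvd a ha)
    have hsupp : F.support = Finset.image (fun i : Fin r => Finsupp.single i d) Finset.univ := by
      apply Finset.ext
      intro a
      constructor
      · intro ha
        obtain ⟨i, rfl⟩ := hshape a ha
        exact Finset.mem_image_of_mem _ (Finset.mem_univ i)
      · intro ha
        obtain ⟨i, _, rfl⟩ := Finset.mem_image.mp ha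
        exact MvPolynomial.mem_support_iff.mpr (hallsingle i)
    have hsingle_inj : Function.Injective (fun i : Fin r => Finsupp.single i d) :=
      Finsupp.single_left_injective hd0
    have hFeq : F = ∑ i : Fin r, (MvPolynomial.monomial (Finsupp.single i d))
        (MvPolynomial.coeff (Finsupp.single i d) F) := by
      conv_lhs => rw [F.as_sum, hsupp]
      rw [Finset.sum_image (fun x _ y _ h => hsingle_inj h)]
    have hex : ∀ i : Fin r, ∃ u : ℂˣ,
        u ^ d = (Units.mk0 _ (hallsingle i))⁻¹ :=
      fun i => exists_unit_pow d hd0 _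
    set u : Fin r → ℂˣ := fun i => (hex i).choose with hudef
    have hu : ∀ i, ((u i : ℂ)) ^ d = (MvPolynomial.coeff (Finsupp.single i d) F)⁻¹ := by
      intro i
      have h7 := congrArg Units.val (hex i).choose_spec
      push_cast at h7
      rw [hudef]
      simpa using h7
    refine ⟨monoGL 1 u, ?_⟩
    rw [monoGL_val, matAct_diag]
    conv_lhs => rw [hFeq]
    rw [dAct, map_sum, fermatForm]
    apply Finset.sum_congr rfl
    intro i _
    have h8 := dAct_monomial (fun k => ((u k : ℂ))) (Finsupp.single i d)
      (MvPolynomial.coeff (Finsupp.single i d) F)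
    rw [dAct] at h8
    rw [h8, wprod_single, hu i, mul_inv_cancel₀ (hallsingle i), X_pow_eq_monomial]
  -- backward direction
  have backward : FormIso F (fermatForm r d) → Nat.card (formAut F) = d ^ r * r.factorial := by
    rintro ⟨A₀, hA₀⟩
    have hinvF : matAct (((A₀⁻¹ : GL (Fin r) ℂ) : Matrix (Fin r) (Fin r) ℂ)) (fermatForm r d)
        = F := by
      rw [← hA₀, ← matAct_mul, ← Units.val_mul, mul_inv_cancel, Units.val_one, matAct_one]
    have hconj : ∀ M : GL (Fin r) ℂ,
        matAct ((M : Matrix (Fin r) (Fin r) ℂ)) (fermatForm r d) = fermatForm r d →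
        A₀ * M * A₀⁻¹ ∈ formAut F := by
      intro M hM
      show matAct _ F = F
      have h1 : ((A₀ * M * A₀⁻¹ : GL (Fin r) ℂ) : Matrix (Fin r) (Fin r) ℂ)
          = ((A₀ : Matrix (Fin r) (Fin r) ℂ) * (M : Matrix (Fin r) (Fin r) ℂ))
            * ((A₀⁻¹ : GL (Fin r) ℂ) : Matrix (Fin r) (Fin r) ℂ) := by
        rw [Units.val_mul, Units.val_mul]
      rw [h1, matAct_mul, matAct_mul, hA₀, hM, hinvF]
    haveI hUfin : Finite ↥{v : ℂˣ | v ^ d = 1} := (muSet_finite d hd0).to_subtype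
    set ι : Equiv.Perm (Fin r) × (Fin r → ↥{v : ℂˣ | v ^ d = 1}) →
        {A : GL (Fin r) ℂ // A ∈ formAut F} := fun p =>
      ⟨A₀ * monoGL p.1 (fun i => (p.2 i).1) * A₀⁻¹,
        hconj _ (by
          rw [monoGL_val]
          exact matAct_monoMat_fermat p.1 _ (fun i => (p.2 i).2))⟩ with hιdef
    have hιinj : Function.Injective ι := by
      intro p q h
      have h1 : A₀ * monoGL p.1 (fun i => (p.2 i).1) * A₀⁻¹
          = A₀ * monoGL q.1 (fun i => (q.2 i).1) * A₀⁻¹ := congrArg Subtype.val h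
      have h2 : monoGL p.1 (fun i => (p.2 i).1) = monoGL q.1 (fun i => (q.2 i).1) :=
        mul_left_cancel (mul_right_cancel h1)
      obtain ⟨h3, h4⟩ := monoGL_inj h2
      refine Prod.ext h3 ?_
      funext i
      exact Subtype.ext (congrFun h4 i)
    have hcard2 : d ^ r * r.factorial ≤ Nat.card (formAut F) := by
      have h5 := Nat.card_le_card_of_injective ι hιinj
      rw [Nat.card_prod, Nat.card_eq_fintype_card, Fintype.card_perm, Fintype.card_fin,
        Nat.card_fun, muSet_card d hd0, Nat.card_eq_fintype_card, Fintype.card_fin] at h5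
      calc d ^ r * r.factorial = r.factorial * d ^ r := Nat.mul_comm _ _
        _ ≤ Nat.card (formAut F) := h5
    omega
  exact ⟨hGsetfin, hbound, forward, backward⟩
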